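/- arXiv:1605.07425 — 4 statements merged into one kernel-verified Lean document; each statement's English description precedes it below -/
import Mathlib

section
/- Let Q be a symmetric positive definite n×n real matrix, A₀ an n×n real matrix with Q·A₀ + A₀'·Q ≤ −I, and q₂ > 0 with Q ≤ q₂·I. Define F(δ) = (I + δ·K₀C)·exp(A·δ) where A₀ = A + K₀C. Then there exists δ* > 0 such that for all δ ∈ [0, δ*), F(δ)'·Q·F(δ) ≤ (1 − δ/(2q₂))·Q. -/
open Matrix

section aux
attribute [local instance] Matrix.linftyOpNormedRing Matrix.linftyOpNormedAlgebra
  Matrix.linftyOpNormedSpace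

variable {n : ℕ}

-- entry bound for linfty op norm
lemma entry_le_norm (E : Matrix (Fin n) (Fin n) ℝ) (i j : Fin n) : |E i j| ≤ ‖E‖ := by
  rw [Matrix.linfty_opNorm_def]
  have h1 : ‖E i j‖₊ ≤ ∑ k, ‖E i k‖₊ := Finset.single_le_sum (f := fun k => ‖E i k‖₊) (fun k _ => zero_le) (Finset.mem_univ j)
  have h2 : (∑ k, ‖E i k‖₊) ≤ (Finset.univ : Finset (Fin n)).sup fun i => ∑ j, ‖E i j‖₊ :=
    Finset.le_sup (f := fun i => ∑ j, ‖E i j‖₊) (Finset.mem_univ i)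
  calc |E i j| = ((‖E i j‖₊ : NNReal) : ℝ) := by
        rw [coe_nnnorm, Real.norm_eq_abs]
    _ ≤ _ := by exact_mod_cast h1.trans h2

-- littleO fact
lemma key_littleO (A M : Matrix (Fin n) (Fin n) ℝ) (Q : Matrix (Fin n) (Fin n) ℝ)
    (F : ℝ → Matrix (Fin n) (Fin n) ℝ)
    (hF : ∀ δ : ℝ, F δ = ((1 : Matrix (Fin n) (Fin n) ℝ) + δ • M) * NormedSpace.exp (δ • A)) :
    (fun δ : ℝ => (F δ)ᵀ * Q * F δ - Q - δ • ((M + A)ᵀ * Q + Q * (M + A)))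
      =o[nhds 0] fun δ : ℝ => δ := by
  have hexp : HasDerivAt (fun δ : ℝ => NormedSpace.exp (δ • A))
      (NormedSpace.exp ((0:ℝ) • A) * A) 0 := hasDerivAt_exp_smul_const A 0
  have hexp' : HasDerivAt (fun δ : ℝ => NormedSpace.exp (δ • A)) A 0 := by
    simpa using hexp
  have hlin : HasDerivAt (fun δ : ℝ => (1 : Matrix (Fin n) (Fin n) ℝ) + δ • M) M 0 := by
    have := ((hasDerivAt_id (0:ℝ)).smul_const M).const_add (1 : Matrix (Fin n) (Fin n) ℝ)
    simp only [id, one_smul] at this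
    exact this
  have hFd : HasDerivAt F (M + A) 0 := by
    have := hlin.mul hexp'
    simp only [zero_smul, add_zero, NormedSpace.exp_zero, mul_one, one_mul] at this
    rw [show F = _ from funext hF]
    exact this
  -- transpose is a continuous linear map
  let T : Matrix (Fin n) (Fin n) ℝ →L[ℝ] Matrix (Fin n) (Fin n) ℝ :=
    LinearMap.toContinuousLinearMap
      { toFun := fun X => Xᵀ, map_add' := fun X Y => Matrix.transpose_add X Y,
        map_smul' := fun c X => Matrix.transpose_smul c X }
  have hFt : HasDerivAt (fun δ => (F δ)ᵀ) (M + A)ᵀ 0 :=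
    T.hasFDerivAt.comp_hasDerivAt 0 hFd
  have hF0 : F 0 = 1 := by simp [hF 0]
  have hH : HasDerivAt (fun δ => (F δ)ᵀ * Q * F δ)
      ((M + A)ᵀ * Q + Q * (M + A)) 0 := by
    have := (hFt.mul_const Q).mul hFd
    rw [hF0] at this
    simp only [Matrix.transpose_one, one_mul, mul_one] at this
    exact this
  have h := hasDerivAt_iff_isLittleO_nhds_zero.mp hH
  simp only [zero_add, hF0, Matrix.transpose_one, one_mul, mul_one] at h
  exact h.congr_left fun δ => by abel_nf

end aux

section main
attribute [local instance] Matrix.linftyOpNormedRing Matrix.linftyOpNormedAlgebra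
  Matrix.linftyOpNormedSpace

/-- If `Q` is symmetric positive definite with `Q A₀ + A₀ᵀ Q ≤ −I` and `Q ≤ q₂ I`, where
`A₀ = A + K₀ C`, then for `F(δ) = (I + δ K₀ C) exp(Aδ)` there is `δ* > 0` such that
`F(δ)ᵀ Q F(δ) ≤ (1 − δ/(2q₂)) Q` for all `δ ∈ [0, δ*)` (Loewner order). -/
theorem stmt_2 (n : ℕ) (A A₀ : Matrix (Fin n) (Fin n) ℝ)
    (K₀ : Matrix (Fin n) (Fin 1) ℝ) (C : Matrix (Fin 1) (Fin n) ℝ)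
    (hA₀ : A₀ = A + K₀ * C)
    (Q : Matrix (Fin n) (Fin n) ℝ) (hQ : Q.PosDef)
    (hLyap : ((-1 : Matrix (Fin n) (Fin n) ℝ) - (Q * A₀ + A₀ᵀ * Q)).PosSemidef)
    (q₂ : ℝ) (hq₂ : 0 < q₂) (hQle : ((q₂ : ℝ) • (1 : Matrix (Fin n) (Fin n) ℝ) - Q).PosSemidef)
    (F : ℝ → Matrix (Fin n) (Fin n) ℝ)
    (hF : ∀ δ : ℝ, F δ = ((1 : Matrix (Fin n) (Fin n) ℝ) + δ • (K₀ * C))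
        * NormedSpace.exp (δ • A)) :
    ∃ δstar > (0 : ℝ), ∀ δ : ℝ, 0 ≤ δ → δ < δstar →
      ((1 - δ / (2 * q₂)) • Q - (F δ)ᵀ * Q * F δ).PosSemidef := by
  set S : Matrix (Fin n) (Fin n) ℝ := Q * A₀ + A₀ᵀ * Q with hS
  have hMA : (K₀ * C) + A = A₀ := by rw [hA₀, add_comm]
  have hlo := key_littleO A (K₀ * C) Q F hF
  rw [hMA] at hlo
  have hlo' : (fun δ : ℝ => (F δ)ᵀ * Q * F δ - Q - δ • S) =o[nhds 0] fun δ : ℝ => δ := by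
    refine hlo.congr_left fun δ => ?_
    rw [hS]; abel_nf
  have hc : (0:ℝ) < 1 / (2 * (n + 1)) := by positivity
  have hev := hlo'.def hc
  rw [Metric.eventually_nhds_iff] at hev
  obtain ⟨ε, hε, hball⟩ := hev
  refine ⟨ε, hε, fun δ hδ0 hδε => ?_⟩
  set E : Matrix (Fin n) (Fin n) ℝ := (F δ)ᵀ * Q * F δ - Q - δ • S with hE
  have hEnorm : ‖E‖ ≤ δ / (2 * (n + 1)) := by
    have hd : dist δ 0 < ε := by
      rw [Real.dist_eq, sub_zero, abs_of_nonneg hδ0]; exact hδε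
    have := hball hd
    rw [Real.norm_eq_abs, abs_of_nonneg hδ0] at this
    calc ‖E‖ ≤ 1 / (2 * (↑n + 1)) * δ := this
      _ = δ / (2 * (↑n + 1)) := by ring
  -- matrix decomposition
  have hq₂' : q₂ ≠ 0 := ne_of_gt hq₂
  have hdecomp : (1 - δ / (2 * q₂)) • Q - (F δ)ᵀ * Q * F δ
      = (δ / (2 * q₂)) • ((q₂ : ℝ) • (1 : Matrix (Fin n) (Fin n) ℝ) - Q)
        + δ • ((-1 : Matrix (Fin n) (Fin n) ℝ) - S)
        + ((δ / 2) • (1 : Matrix (Fin n) (Fin n) ℝ) - E) := by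
    rw [hE]
    match_scalars <;> field_simp <;> ring
  rw [hdecomp]
  have hermOf : ∀ (M : Matrix (Fin n) (Fin n) ℝ), Mᵀ = M → M.IsHermitian :=
    fun M h => (Matrix.conjTranspose_eq_transpose_of_trivial M).trans h
  have hQT : Qᵀ = Q := (Matrix.conjTranspose_eq_transpose_of_trivial Q).symm.trans hQ.1
  have hFh : ((F δ)ᵀ * Q * F δ).IsHermitian := by
    refine hermOf _ ?_
    simp [Matrix.transpose_mul, hQT, Matrix.mul_assoc]
  have hSh : S.IsHermitian := by
    refine hermOf _ ?_
    rw [hS]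
    simp only [Matrix.transpose_add, Matrix.transpose_mul, hQT, Matrix.transpose_transpose]
    exact add_comm _ _
  have hEh : E.IsHermitian := by
    refine hermOf _ ?_
    rw [hE]
    simp only [Matrix.transpose_sub, Matrix.transpose_smul]
    rw [(Matrix.conjTranspose_eq_transpose_of_trivial _).symm.trans hFh,
      hQT, (Matrix.conjTranspose_eq_transpose_of_trivial _).symm.trans hSh]
  have hthird : ((δ / 2) • (1 : Matrix (Fin n) (Fin n) ℝ) - E).PosSemidef := by
    rw [Matrix.posSemidef_iff_dotProduct_mulVec]
    constructor
    · refine hermOf _ ?_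
      simp only [Matrix.transpose_sub, Matrix.transpose_smul, Matrix.transpose_one]
      rw [(Matrix.conjTranspose_eq_transpose_of_trivial _).symm.trans hEh]
    · intro x
      have hT : (0:ℝ) ≤ x ⬝ᵥ x := dotProduct_star_self_nonneg x
      have hx : ∀ i, star x i = x i := fun i => rfl
      have hquad : x ⬝ᵥ (E *ᵥ x) ≤ (n * ‖E‖) * (x ⬝ᵥ x) := by
        have habs : |x ⬝ᵥ (E *ᵥ x)| ≤ ‖E‖ * (∑ i, |x i|) ^ 2 := by
          calc |x ⬝ᵥ (E *ᵥ x)| = |∑ i, x i * ∑ j, E i j * x j| := by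
                simp [dotProduct, Matrix.mulVec, dotProduct]
            _ ≤ ∑ i, |x i * ∑ j, E i j * x j| := Finset.abs_sum_le_sum_abs _ _
            _ ≤ ∑ i, |x i| * ∑ j, ‖E‖ * |x j| := by
                refine Finset.sum_le_sum fun i _ => ?_
                rw [abs_mul]
                refine mul_le_mul_of_nonneg_left ?_ (abs_nonneg _)
                calc |∑ j, E i j * x j| ≤ ∑ j, |E i j * x j| := Finset.abs_sum_le_sum_abs _ _
                  _ ≤ ∑ j, ‖E‖ * |x j| := by
                      refine Finset.sum_le_sum fun j _ => ?_
                      rw [abs_mul]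
                      exact mul_le_mul_of_nonneg_right (entry_le_norm E i j) (abs_nonneg _)
            _ = ‖E‖ * (∑ i, |x i|) ^ 2 := by
                rw [← Finset.mul_sum, ← Finset.sum_mul]
                ring
        have hcs : (∑ i, |x i|) ^ 2 ≤ n * ∑ i, |x i| ^ 2 := by
          simpa using sq_sum_le_card_mul_sum_sq (s := (Finset.univ : Finset (Fin n)))
            (f := fun i => |x i|)
        have hsum : ∑ i, |x i| ^ 2 = x ⬝ᵥ x := by
          simp [dotProduct, sq_abs, pow_two]
        calc x ⬝ᵥ (E *ᵥ x) ≤ |x ⬝ᵥ (E *ᵥ x)| := le_abs_self _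
          _ ≤ ‖E‖ * (∑ i, |x i|) ^ 2 := habs
          _ ≤ ‖E‖ * (n * ∑ i, |x i| ^ 2) :=
              mul_le_mul_of_nonneg_left hcs (norm_nonneg _)
          _ = (n * ‖E‖) * (x ⬝ᵥ x) := by rw [hsum]; ring
      have hEn : (n : ℝ) * ‖E‖ ≤ δ / 2 := by
        have h1 : (n : ℝ) * ‖E‖ ≤ n * (δ / (2 * (n + 1))) :=
          mul_le_mul_of_nonneg_left hEnorm (Nat.cast_nonneg n)
        have h2 : (n : ℝ) * (δ / (2 * ((n : ℝ) + 1))) ≤ δ / 2 := by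
          rw [mul_div_assoc', div_le_div_iff₀ (by positivity) (by norm_num : (0:ℝ) < 2)]
          nlinarith [Nat.cast_nonneg (α := ℝ) n]
        linarith
      have : x ⬝ᵥ (((δ / 2) • (1 : Matrix (Fin n) (Fin n) ℝ) - E) *ᵥ x)
          = (δ / 2) * (x ⬝ᵥ x) - x ⬝ᵥ (E *ᵥ x) := by
        simp [Matrix.sub_mulVec, Matrix.smul_mulVec, dotProduct_sub,
          dotProduct_smul, smul_eq_mul]
      have hstar : star x = x := funext hx
      rw [hstar, this]
      nlinarith
  have h1 : ((δ / (2 * q₂)) • ((q₂ : ℝ) • (1 : Matrix (Fin n) (Fin n) ℝ) - Q)).PosSemidef := by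
    rw [Matrix.posSemidef_iff_dotProduct_mulVec]
    constructor
    · refine hermOf _ ?_
      rw [Matrix.transpose_smul,
        (Matrix.conjTranspose_eq_transpose_of_trivial _).symm.trans hQle.1]
    · intro x
      have := (Matrix.posSemidef_iff_dotProduct_mulVec.mp hQle).2 x
      simp only [Matrix.smul_mulVec, dotProduct_smul, smul_eq_mul]
      positivity
  have h2 : (δ • ((-1 : Matrix (Fin n) (Fin n) ℝ) - S)).PosSemidef := by
    rw [Matrix.posSemidef_iff_dotProduct_mulVec]
    constructor
    · refine hermOf _ ?_
      rw [Matrix.transpose_smul,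
        (Matrix.conjTranspose_eq_transpose_of_trivial _).symm.trans hLyap.1]
    · intro x
      have := (Matrix.posSemidef_iff_dotProduct_mulVec.mp hLyap).2 x
      simp only [Matrix.smul_mulVec, dotProduct_smul, smul_eq_mul]
      positivity
  exact Matrix.posSemidef_iff_dotProduct_mulVec.mpr ⟨(h1.1.add h2.1).add hthird.1, fun x => by
    simp only [Matrix.add_mulVec, dotProduct_add]
    have := (Matrix.posSemidef_iff_dotProduct_mulVec.mp h1).2 x; have := (Matrix.posSemidef_iff_dotProduct_mulVec.mp h2).2 x; have := (Matrix.posSemidef_iff_dotProduct_mulVec.mp hthird).2 x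
    linarith⟩
end main
end

section
/- Suppose there exist row vector K_c and column vector K_o in ℝⁿ such that A + B·K_c and A + K_o·C are Hurwitz. Consider the discrete-time system (x̂_{k+1}, e_{k+1}) = M(δ)·(x̂_k, e_k) where M(δ) is the block upper-triangular matrix with diagonal blocks F_c(δ) = exp(Aδ) + ∫₀^δ exp(A(δ−s)) B K_c ds and F_o(δ) = (I + δ K_o C) exp(Aδ), and off-diagonal block δ K_o C exp(Aδ). Then there exists δ* > 0 such that for all δ ∈ (0, δ*), the spectral radius of M(δ) is strictly less than 1 (equivalently, the origin is globally asymptotically stable for the discrete system). -/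
open Matrix Filter NormedSpace

attribute [local instance] Matrix.linftyOpNormedAddCommGroup Matrix.linftyOpNormedSpace
  Matrix.linftyOpNormedRing Matrix.linftyOpNormedAlgebra

section Aux

variable {N : Type*} [Fintype N] [DecidableEq N]


/-- spectral exclusion: if spectrum of Acl is in open left half plane, then eventually the
spectrum of `1 + δ • G δ` is inside the unit disc. -/
lemma key (Acl : Matrix N N ℂ) (hA : ∀ μ ∈ spectrum ℂ Acl, μ.re < 0)
    (G : ℝ → Matrix N N ℂ) (hG : Tendsto G (nhdsWithin 0 (Set.Ioi 0)) (nhds Acl)) :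
    ∃ δstar > (0:ℝ), ∀ δ : ℝ, 0 < δ → δ < δstar →
      ∀ μ ∈ spectrum ℂ ((1 : Matrix N N ℂ) + δ • G δ), ‖μ‖ < 1 := by
  rcases isEmpty_or_nonempty N with hN | hN
  · refine ⟨1, one_pos, fun δ _ _ μ hμ => absurd hμ ?_⟩
    rw [spectrum.notMem_iff]
    exact isUnit_of_subsingleton _
  -- choose α
  obtain ⟨α, hα0, hαspec⟩ : ∃ α > (0:ℝ), ∀ μ ∈ spectrum ℂ Acl, μ.re < -α := by
    rcases Set.eq_empty_or_nonempty (spectrum ℂ Acl) with he | hne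
    · exact ⟨1, one_pos, fun μ hμ => by simp [he] at hμ⟩
    · obtain ⟨μ0, hμ0, hmax⟩ := (spectrum.isCompact Acl).exists_isMaxOn hne
        (Complex.continuous_re.continuousOn)
      have h2 := hA μ0 hμ0
      refine ⟨-μ0.re / 2, by linarith, fun μ hμ => ?_⟩
      have h1 := hmax hμ
      simp only [Set.mem_setOf_eq] at h1
      linarith
  set L : ℝ := ‖Acl‖ + 1 with hL
  have hL1 : (1:ℝ) ≤ L := by simp only [hL]; linarith [norm_nonneg Acl]
  have hL0 : (0:ℝ) < L := lt_of_lt_of_le one_pos hL1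
  set S : Set ℂ := {z : ℂ | -α ≤ z.re ∧ ‖z‖ ≤ L} with hS
  have hSc : IsCompact S := by
    refine (isCompact_closedBall (0:ℂ) L).of_isClosed_subset ?_ ?_
    · exact (isClosed_le continuous_const Complex.continuous_re).inter
        (isClosed_le (continuous_norm) continuous_const)
    · intro z hz; simpa [Metric.mem_closedBall, dist_eq_norm] using hz.2
  have hSspec : ∀ z ∈ S, IsUnit (algebraMap ℂ (Matrix N N ℂ) z - Acl) := by
    intro z hz
    rw [← spectrum.notMem_iff]
    intro hmem
    exact absurd hz.1 (not_le.mpr (by linarith [hαspec z hmem]))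
  -- resolvent bound
  obtain ⟨R, hR⟩ : ∃ R, ∀ z ∈ S, ‖Ring.inverse (algebraMap ℂ (Matrix N N ℂ) z - Acl)‖ ≤ R := by
    refine hSc.exists_bound_of_continuousOn ?_
    intro z hz
    have h1 : ContinuousAt (fun z : ℂ => algebraMap ℂ (Matrix N N ℂ) z - Acl) z := by
      exact ((continuous_algebraMap ℂ _).sub continuous_const).continuousAt
    have h2 : ContinuousAt Ring.inverse (algebraMap ℂ (Matrix N N ℂ) z - Acl) := by
      obtain ⟨u, hu⟩ := hSspec z hz
      exact hu ▸ NormedRing.inverse_continuousAt u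
    exact ContinuousAt.continuousWithinAt (Filter.Tendsto.comp h2 h1)
  set R' : ℝ := max R 1 with hR'
  have hR'1 : (1:ℝ) ≤ R' := le_max_right _ _
  have hR'0 : (0:ℝ) < R' := lt_of_lt_of_le one_pos hR'1
  set ε : ℝ := (R' + 1)⁻¹ with hε
  have hε0 : 0 < ε := by positivity
  have hε1 : ε ≤ 1 := by
    rw [hε]; rw [inv_le_one_iff₀]; right; linarith
  -- from tendsto get δ1
  erw [Metric.tendsto_nhdsWithin_nhds] at hG
  obtain ⟨δ1, hδ10, hδ1⟩ := hG ε hε0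
  refine ⟨min δ1 (α / L ^ 2), lt_min hδ10 (by positivity), fun δ hδ0 hδs μ hμ => ?_⟩
  have hδδ1 : δ < δ1 := lt_of_lt_of_le hδs (min_le_left _ _)
  have hδα : δ < α / L ^ 2 := lt_of_lt_of_le hδs (min_le_right _ _)
  set X := G δ with hX
  have hXA : ‖X - Acl‖ < ε := by
    have := hδ1 (Set.mem_Ioi.mpr hδ0) (by rwa [Real.dist_eq, sub_zero, abs_of_pos hδ0])
    rwa [dist_eq_norm] at this
  have hδC : (δ : ℂ) ≠ 0 := by exact_mod_cast hδ0.ne'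
  -- z in spectrum of X
  set z : ℂ := (μ - 1) / δ with hz
  have hμz : μ = 1 + δ * z := by rw [hz, mul_div_cancel₀ (μ - 1) hδC]; ring
  have hzX : z ∈ spectrum ℂ X := by
    rw [spectrum.mem_iff] at hμ ⊢
    intro hunit
    apply hμ
    have hsm : δ • X = (δ:ℂ) • X := by
      rw [← smul_one_smul ℂ δ X, Complex.real_smul, mul_one]
    have hfact : algebraMap ℂ (Matrix N N ℂ) μ - (1 + δ • X)
        = (δ:ℂ) • (algebraMap ℂ (Matrix N N ℂ) z - X) := by
      rw [Algebra.algebraMap_eq_smul_one, Algebra.algebraMap_eq_smul_one]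
      have hdz : (δ:ℂ) * z = μ - 1 := by
        rw [hz]; field_simp
      rw [smul_sub, smul_smul, hdz, hsm, sub_smul, one_smul]
      abel
    rw [hfact]
    exact (isUnit_smul_iff (Units.mk0 (δ:ℂ) hδC) _).mpr hunit
  -- bound on z
  have hzL : ‖z‖ ≤ L := by
    calc ‖z‖ ≤ ‖X‖ := spectrum.norm_le_norm_of_mem hzX
    _ = ‖Acl + (X - Acl)‖ := by congr 1; abel
    _ ≤ ‖Acl‖ + ‖X - Acl‖ := norm_add_le _ _
    _ ≤ ‖Acl‖ + 1 := by linarith [le_of_lt hXA, hε1]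
  -- z.re < -α
  have hzre : z.re < -α := by
    by_contra hcon
    push_neg at hcon
    have hzS : z ∈ S := ⟨hcon, hzL⟩
    obtain ⟨u, hu⟩ := hSspec z hzS
    have hinv : ‖(↑u⁻¹ : Matrix N N ℂ)‖ ≤ R' := by
      have := hR z hzS
      rw [← hu, Ring.inverse_unit] at this
      exact le_trans this (le_max_left _ _)
    have hsmall : ‖(↑u⁻¹ : Matrix N N ℂ) * (X - Acl)‖ < 1 := by
      calc ‖(↑u⁻¹ : Matrix N N ℂ) * (X - Acl)‖ ≤ ‖(↑u⁻¹ : Matrix N N ℂ)‖ * ‖X - Acl‖ :=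
            norm_mul_le _ _
      _ ≤ R' * ε := by
            apply mul_le_mul hinv (le_of_lt hXA) (norm_nonneg _) (le_of_lt hR'0) |>.trans_eq rfl
      _ < 1 := by
            rw [hε, mul_inv_lt_iff₀ (by linarith), one_mul]; linarith
    have hunit2 : IsUnit (algebraMap ℂ (Matrix N N ℂ) z - X) := by
      have : algebraMap ℂ (Matrix N N ℂ) z - X
          = (u : Matrix N N ℂ) * (1 - (↑u⁻¹ : Matrix N N ℂ) * (X - Acl)) := by
        rw [mul_sub, mul_one, ← mul_assoc, u.mul_inv, one_mul, hu]
        abel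
      rw [this]
      exact u.isUnit.mul (Units.oneSub _ hsmall).isUnit
    rw [spectrum.mem_iff] at hzX
    exact hzX hunit2
  -- final computation
  have habs : (‖μ‖) ^ 2 < 1 := by
    have hnormsq : (‖μ‖) ^ 2 = 1 + 2 * δ * z.re + δ ^ 2 * (‖z‖) ^ 2 := by
      rw [hμz, ← Complex.normSq_eq_norm_sq, ← Complex.normSq_eq_norm_sq]
      simp [Complex.normSq_apply, Complex.add_re, Complex.add_im, Complex.mul_re, Complex.mul_im]
      ring
    have hzL' : (‖z‖) ^ 2 ≤ L ^ 2 := by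
      have : ‖z‖ ≤ L := hzL
      nlinarith [norm_nonneg z]
    have h1 : δ ^ 2 * (‖z‖) ^ 2 ≤ δ ^ 2 * L ^ 2 := by nlinarith
    have h2 : δ * L ^ 2 < α := by
      rwa [lt_div_iff₀ (by positivity)] at hδα
    nlinarith
  nlinarith [norm_nonneg μ, habs]

/-- derivative part: `δ⁻¹ • (exp (δ • A) - 1) → A` as `δ → 0⁺`. -/
lemma tendsto_exp_part (A : Matrix N N ℂ) :
    Tendsto (fun δ : ℝ => δ⁻¹ • (exp (δ • A) - 1)) (nhdsWithin 0 (Set.Ioi 0)) (nhds A) := by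
  have hd : HasDerivAt (fun t : ℝ => exp (t • A)) A 0 := by
    have h := hasDerivAt_exp_smul_const A (0:ℝ)
    simp only [zero_smul, NormedSpace.exp_zero, one_mul] at h
    exact h
  have := (hasDerivAt_iff_tendsto_slope).mp hd
  have h2 : Tendsto (slope (fun t : ℝ => exp (t • A)) 0) (nhdsWithin 0 (Set.Ioi 0)) (nhds A) :=
    this.mono_left (nhdsWithin_mono 0 (fun x hx => Set.mem_compl_singleton_iff.mpr
      (ne_of_gt hx)))
  refine h2.congr (fun δ => ?_)
  simp [slope_def_field, slope, vsub_eq_sub]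

/-- integral part: `δ⁻¹ • ∫₀^δ exp((δ-s)•A) * P ds → P` as `δ → 0⁺`. -/
lemma tendsto_int_part (A P : Matrix N N ℂ) :
    Tendsto (fun δ : ℝ => δ⁻¹ • ∫ s in (0:ℝ)..δ, exp ((δ - s) • A) * P)
      (nhdsWithin 0 (Set.Ioi 0)) (nhds P) := by
  erw [Metric.tendsto_nhdsWithin_nhds]
  intro ε hε
  set ε' : ℝ := ε / (‖P‖ + 1) with hε'
  have hε'0 : 0 < ε' := by positivity
  have hcont : ContinuousAt (fun u : ℝ => exp (u • A)) 0 :=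
    (exp_continuous.comp (continuous_id.smul continuous_const)).continuousAt
  erw [Metric.continuousAt_iff] at hcont
  obtain ⟨δ0, hδ00, hδ0⟩ := hcont ε' hε'0
  refine ⟨δ0, hδ00, fun δ hδmem hδd => ?_⟩
  have hδpos : 0 < δ := hδmem
  have hδlt : δ < δ0 := by rwa [Real.dist_eq, sub_zero, abs_of_pos hδpos] at hδd
  have hbound : ∀ u : ℝ, 0 ≤ u → u ≤ δ → ‖exp (u • A) - 1‖ ≤ ε' := by
    intro u hu0 huδ
    have : dist u 0 < δ0 := by
      rw [Real.dist_eq, sub_zero, abs_of_nonneg hu0]; linarith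
    have := hδ0 this
    rw [dist_eq_norm] at this
    simpa using this.le
  have hint : @IntervalIntegrable _ _ NormedAddCommGroup.toENormedAddCommMonoid.toENormedAddMonoid (fun s : ℝ => exp ((δ - s) • A) * P)
      MeasureTheory.volume 0 δ := by
    apply Continuous.intervalIntegrable
    exact (exp_continuous.comp ((continuous_const.sub continuous_id).smul
      continuous_const)).mul continuous_const
  have hintsub : @IntervalIntegrable _ _ NormedAddCommGroup.toENormedAddCommMonoid.toENormedAddMonoid (fun s : ℝ => exp ((δ - s) • A) * P - P)
      MeasureTheory.volume 0 δ := hint.sub intervalIntegrable_const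
  have hsplit : (∫ s in (0:ℝ)..δ, exp ((δ - s) • A) * P)
      = (∫ s in (0:ℝ)..δ, (exp ((δ - s) • A) * P - P)) + δ • P := by
    rw [intervalIntegral.integral_sub hint intervalIntegrable_const,
      intervalIntegral.integral_const]
    simp
  have hnorm : ‖∫ s in (0:ℝ)..δ, (exp ((δ - s) • A) * P - P)‖ ≤ ε' * ‖P‖ * δ := by
    have := intervalIntegral.norm_integral_le_of_norm_le_const
      (C := ε' * ‖P‖) (f := fun s : ℝ => exp ((δ - s) • A) * P - P) (a := (0:ℝ)) (b := δ) ?_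
    · rwa [sub_zero, abs_of_pos hδpos] at this
    · intro s hs
      rw [Set.uIoc_of_le hδpos.le] at hs
      show ‖exp ((δ - s) • A) * P - P‖ ≤ ε' * ‖P‖
      have h1 : exp ((δ - s) • A) * P - P = (exp ((δ - s) • A) - 1) * P := by
        rw [sub_mul, one_mul]
      rw [h1]
      calc ‖(exp ((δ - s) • A) - 1) * P‖ ≤ ‖exp ((δ - s) • A) - 1‖ * ‖P‖ := norm_mul_le _ _
      _ ≤ ε' * ‖P‖ := by
          apply mul_le_mul_of_nonneg_right _ (norm_nonneg _)
          exact hbound (δ - s) (by linarith [hs.2]) (by linarith [hs.1])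
  rw [dist_eq_norm]
  have heq : δ⁻¹ • (∫ s in (0:ℝ)..δ, exp ((δ - s) • A) * P) - P
      = δ⁻¹ • (∫ s in (0:ℝ)..δ, (exp ((δ - s) • A) * P - P)) := by
    rw [hsplit, smul_add, smul_smul, inv_mul_cancel₀ hδpos.ne', one_smul]
    abel
  rw [heq]
  calc ‖δ⁻¹ • ∫ s in (0:ℝ)..δ, (exp ((δ - s) • A) * P - P)‖
      = |δ⁻¹| * ‖∫ s in (0:ℝ)..δ, (exp ((δ - s) • A) * P - P)‖ := by
        rw [norm_smul, Real.norm_eq_abs]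
    _ ≤ δ⁻¹ * (ε' * ‖P‖ * δ) := by
        rw [abs_of_pos (by positivity)]
        exact mul_le_mul_of_nonneg_left hnorm (by positivity)
    _ = ε' * ‖P‖ := by
        rw [mul_comm (ε' * ‖P‖) δ, ← mul_assoc, inv_mul_cancel₀ hδpos.ne', one_mul]
    _ < ε := by
        rw [hε', div_mul_eq_mul_div, div_lt_iff₀ (by positivity)]
        nlinarith [norm_nonneg P]
/-- combined: `δ⁻¹ • (Fc δ - 1) → A + P`. -/
lemma tendsto_Gc (A P : Matrix N N ℂ) :
    Tendsto (fun δ : ℝ => δ⁻¹ • (exp (δ • A)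
        + (∫ s in (0:ℝ)..δ, exp ((δ - s) • A) * P) - 1))
      (nhdsWithin 0 (Set.Ioi 0)) (nhds (A + P)) := by
  have h := (tendsto_exp_part A).add (tendsto_int_part A P)
  refine h.congr (fun δ => ?_)
  rw [← smul_add]
  congr 1
  abel

/-- combined: `δ⁻¹ • (Fo δ - 1) → A + Q`. -/
lemma tendsto_Go (A Q : Matrix N N ℂ) :
    Tendsto (fun δ : ℝ => δ⁻¹ • ((1 + δ • Q) * exp (δ • A) - 1))
      (nhdsWithin 0 (Set.Ioi 0)) (nhds (A + Q)) := by
  have h2 : Tendsto (fun δ : ℝ => Q * exp (δ • A)) (nhdsWithin 0 (Set.Ioi 0)) (nhds Q) := by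
    have hc : Continuous (fun δ : ℝ => Q * exp (δ • A)) :=
      continuous_const.mul (exp_continuous.comp (continuous_id.smul continuous_const))
    have h0 : Tendsto (fun δ : ℝ => Q * exp (δ • A)) (nhds 0) (nhds (Q * exp ((0:ℝ) • A))) :=
      hc.tendsto 0
    have h1 := h0.mono_left (nhdsWithin_le_nhds (s := Set.Ioi (0:ℝ)))
    simpa using h1
  have h := (tendsto_exp_part A).add h2
  apply Tendsto.congr' _ h
  filter_upwards [self_mem_nhdsWithin] with δ hδ
  have hδ0 : (δ:ℝ) ≠ 0 := ne_of_gt hδ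
  have hmul : (1 + δ • Q) * exp (δ • A) - 1
      = (exp (δ • A) - 1) + δ • (Q * exp (δ • A)) := by
    rw [add_mul, one_mul, smul_mul_assoc]
    abel
  rw [hmul, smul_add, smul_smul, inv_mul_cancel₀ hδ0, one_smul]

/-- spectrum of a block upper-triangular matrix is contained in union of blocks' spectra. -/
lemma spec_fromBlocks {p q : Type*} [Fintype p] [Fintype q] [DecidableEq p] [DecidableEq q]
    (a : Matrix p p ℂ) (b : Matrix p q ℂ) (d : Matrix q q ℂ) (μ : ℂ)
    (h : μ ∈ spectrum ℂ (Matrix.fromBlocks a b 0 d)) :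
    μ ∈ spectrum ℂ a ∨ μ ∈ spectrum ℂ d := by
  by_contra hcon
  push_neg at hcon
  obtain ⟨h1, h2⟩ := hcon
  rw [spectrum.notMem_iff] at h1 h2
  rw [spectrum.mem_iff] at h
  apply h
  have key : algebraMap ℂ (Matrix (p ⊕ q) (p ⊕ q) ℂ) μ - Matrix.fromBlocks a b 0 d
      = Matrix.fromBlocks (algebraMap ℂ (Matrix p p ℂ) μ - a) (-b) 0
          (algebraMap ℂ (Matrix q q ℂ) μ - d) := by
    ext i j
    cases i <;> cases j <;>
      simp [Matrix.algebraMap_matrix_apply, Matrix.fromBlocks, Matrix.sub_apply]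
  rw [key, Matrix.isUnit_iff_isUnit_det, Matrix.det_fromBlocks_zero₂₁]
  exact ((Matrix.isUnit_iff_isUnit_det _).mp h1).mul ((Matrix.isUnit_iff_isUnit_det _).mp h2)

/-- mapping of interval integral under entrywise `algebraMap ℝ ℂ`. -/
lemma map_intervalIntegral {n : ℕ} (f : ℝ → Matrix (Fin n) (Fin n) ℝ) (a b : ℝ)
    (hf : @IntervalIntegrable _ _ NormedAddCommGroup.toENormedAddCommMonoid.toENormedAddMonoid f MeasureTheory.volume a b) :
    (∫ s in a..b, f s).map (algebraMap ℝ ℂ) = ∫ s in a..b, (f s).map (algebraMap ℝ ℂ) := by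
  let Ψ : Matrix (Fin n) (Fin n) ℝ →L[ℝ] Matrix (Fin n) (Fin n) ℂ :=
    LinearMap.toContinuousLinearMap (AlgHom.mapMatrix (m := Fin n) (Algebra.ofId ℝ ℂ)).toLinearMap
  exact (Ψ.intervalIntegral_comp_comm hf).symm

/-- mapping of the matrix exponential under entrywise `algebraMap ℝ ℂ`. -/
lemma map_exp_smul {n : ℕ} (δ : ℝ) (A : Matrix (Fin n) (Fin n) ℝ) :
    (exp (δ • A)).map (algebraMap ℝ ℂ) = exp (δ • A.map (algebraMap ℝ ℂ)) := by
  have hc : Continuous fun M : Matrix (Fin n) (Fin n) ℝ => M.map (algebraMap ℝ ℂ) :=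
    Continuous.matrix_map continuous_id (continuous_algebraMap ℝ ℂ)
  have h := map_exp ((algebraMap ℝ ℂ).mapMatrix (m := Fin n)) hc (δ • A)
  have h2 : (algebraMap ℝ ℂ).mapMatrix (δ • A) = δ • A.map (algebraMap ℝ ℂ) := by
    ext i j
    simp [Matrix.map_apply, Complex.real_smul]
  rw [← h2]
  exact h

/-- entrywise map commutes with real scalar multiplication. -/
lemma mmapSmul {n : ℕ} (δ : ℝ) (X : Matrix (Fin n) (Fin n) ℝ) :
    (δ • X).map (algebraMap ℝ ℂ) = δ • X.map (algebraMap ℝ ℂ) := by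
  ext i j
  simp [Matrix.map_apply, Complex.real_smul]

/-- entrywise map commutes with addition. -/
lemma mmapAdd {n : ℕ} (X Y : Matrix (Fin n) (Fin n) ℝ) :
    (X + Y).map (algebraMap ℝ ℂ) = X.map (algebraMap ℝ ℂ) + Y.map (algebraMap ℝ ℂ) :=
  Matrix.map_add _ (map_add (algebraMap ℝ ℂ)) X Y

end Aux

/-- If `A + B Kc` and `A + Ko C` are Hurwitz, then the block matrix
`M(δ) = [[F_c(δ), δ Ko C exp(Aδ)], [0, F_o(δ)]]`, with
`F_c(δ) = exp(Aδ) + ∫₀^δ exp(A(δ−s)) B Kc ds` and `F_o(δ) = (I + δ Ko C) exp(Aδ)`,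
has spectral radius strictly less than `1` for all sufficiently small `δ > 0`. -/
theorem stmt_4 (n : ℕ) (A : Matrix (Fin n) (Fin n) ℝ)
    (B : Matrix (Fin n) (Fin 1) ℝ) (C : Matrix (Fin 1) (Fin n) ℝ)
    (Kc : Matrix (Fin 1) (Fin n) ℝ) (Ko : Matrix (Fin n) (Fin 1) ℝ)
    (hc : ∀ μ ∈ spectrum ℂ ((A + B * Kc).map (algebraMap ℝ ℂ)), μ.re < 0)
    (ho : ∀ μ ∈ spectrum ℂ ((A + Ko * C).map (algebraMap ℝ ℂ)), μ.re < 0)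
    (Fc Fo : ℝ → Matrix (Fin n) (Fin n) ℝ)
    (hFc : ∀ δ : ℝ, Fc δ = NormedSpace.exp (δ • A)
        + ∫ s in (0 : ℝ)..δ, NormedSpace.exp ((δ - s) • A) * (B * Kc))
    (hFo : ∀ δ : ℝ, Fo δ = ((1 : Matrix (Fin n) (Fin n) ℝ) + δ • (Ko * C))
        * NormedSpace.exp (δ • A))
    (M : ℝ → Matrix (Fin n ⊕ Fin n) (Fin n ⊕ Fin n) ℝ)
    (hM : ∀ δ : ℝ, M δ = Matrix.fromBlocks (Fc δ) (δ • (Ko * C * NormedSpace.exp (δ • A)))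
        0 (Fo δ)) :
    ∃ δstar > (0 : ℝ), ∀ δ : ℝ, 0 < δ → δ < δstar →
      ∀ μ ∈ spectrum ℂ ((M δ).map (algebraMap ℝ ℂ)), ‖μ‖ < 1 := by
  set φ := algebraMap ℝ ℂ with hφ
  set Aℂ : Matrix (Fin n) (Fin n) ℂ := A.map φ with hAC
  set Pℂ : Matrix (Fin n) (Fin n) ℂ := (B * Kc).map φ with hPC
  set Qℂ : Matrix (Fin n) (Fin n) ℂ := (Ko * C).map φ with hQC
  -- mapped versions of Fc and Fo
  have hFcmap : ∀ δ : ℝ, (Fc δ).map φ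
      = exp (δ • Aℂ) + ∫ s in (0:ℝ)..δ, exp ((δ - s) • Aℂ) * Pℂ := by
    intro δ
    have hint : @IntervalIntegrable _ _ NormedAddCommGroup.toENormedAddCommMonoid.toENormedAddMonoid (fun s : ℝ => exp ((δ - s) • A) * (B * Kc))
        MeasureTheory.volume 0 δ := by
      apply Continuous.intervalIntegrable
      exact (exp_continuous.comp ((continuous_const.sub continuous_id).smul
        continuous_const)).mul continuous_const
    rw [hFc δ, mmapAdd, map_intervalIntegral _ _ _ hint, map_exp_smul]
    congr 1
    refine intervalIntegral.integral_congr (fun s _ => ?_)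
    rw [Matrix.map_mul, map_exp_smul]
  have hFomap : ∀ δ : ℝ, (Fo δ).map φ = (1 + δ • Qℂ) * exp (δ • Aℂ) := by
    intro δ
    rw [hFo δ, Matrix.map_mul, map_exp_smul, mmapAdd, mmapSmul,
      Matrix.map_one φ (map_zero φ) (map_one φ)]
  -- the two G functions
  set Gc : ℝ → Matrix (Fin n) (Fin n) ℂ := fun δ => δ⁻¹ • ((Fc δ).map φ - 1) with hGc
  set Go : ℝ → Matrix (Fin n) (Fin n) ℂ := fun δ => δ⁻¹ • ((Fo δ).map φ - 1) with hGo
  have hc' : ∀ μ ∈ spectrum ℂ (Aℂ + Pℂ), μ.re < 0 := by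
    intro μ hμ
    apply hc
    rwa [mmapAdd]
  have ho' : ∀ μ ∈ spectrum ℂ (Aℂ + Qℂ), μ.re < 0 := by
    intro μ hμ
    apply ho
    rwa [mmapAdd]
  have hGctend : Tendsto Gc (nhdsWithin 0 (Set.Ioi 0)) (nhds (Aℂ + Pℂ)) := by
    have := tendsto_Gc Aℂ Pℂ
    refine this.congr (fun δ => ?_)
    show _ = δ⁻¹ • ((Fc δ).map ⇑φ - 1)
    rw [hFcmap δ]
  have hGotend : Tendsto Go (nhdsWithin 0 (Set.Ioi 0)) (nhds (Aℂ + Qℂ)) := by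
    have := tendsto_Go Aℂ Qℂ
    refine this.congr (fun δ => ?_)
    show _ = δ⁻¹ • ((Fo δ).map ⇑φ - 1)
    rw [hFomap δ]
  obtain ⟨δc, hδc0, hδc⟩ := key (Aℂ + Pℂ) hc' Gc hGctend
  obtain ⟨δo, hδo0, hδo⟩ := key (Aℂ + Qℂ) ho' Go hGotend
  refine ⟨min δc δo, lt_min hδc0 hδo0, fun δ hδ0 hδs μ hμ => ?_⟩
  have hδδc : δ < δc := lt_of_lt_of_le hδs (min_le_left _ _)
  have hδδo : δ < δo := lt_of_lt_of_le hδs (min_le_right _ _)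
  -- reduce to blocks
  rw [hM δ, Matrix.fromBlocks_map] at hμ
  have h0 : (0 : Matrix (Fin n) (Fin n) ℝ).map φ = 0 := Matrix.map_zero φ (map_zero φ)
  rw [h0] at hμ
  have hcases := spec_fromBlocks _ _ _ μ hμ
  have hrecover : ∀ X : Matrix (Fin n) (Fin n) ℂ, X = 1 + δ • (δ⁻¹ • (X - 1)) := by
    intro X
    rw [smul_smul, mul_inv_cancel₀ (ne_of_gt hδ0), one_smul]
    abel
  rcases hcases with hspec | hspec
  · apply hδc δ hδ0 hδδc
    rwa [← hrecover ((Fc δ).map φ)]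
  · apply hδo δ hδ0 hδδo
    rwa [← hrecover ((Fo δ).map φ)]
end

section
/- Let P, Q be symmetric positive definite n×n matrices, μ > 0, and V(e, x̂) = x̂'P x̂ + μ e'Q e. Suppose there exist p₁, p₂, q₁, q₂ > 0 with p₁I ≤ P ≤ p₂I, q₁I ≤ Q ≤ q₂I, and δ > 0 such that e_{k+1}'Q e_{k+1} ≤ (1 − δ/(2q₂)) e_k'Q e_k and x̂_k' F_c(δ)' P F_c(δ) x̂_k ≤ (1 − δ/(2p₂)) x̂_k' P x̂_k for the update x̂_{k+1} = F_c(δ) x̂_k + F_{oc}(δ) e_k, e_{k+1} = F_o(δ) e_k. Then for μ ≥ 2 q₂ N(δ)/(δ q₁), where N(δ) = ‖F_{oc}(δ)‖²‖P‖ + ‖F_c(δ)‖²‖F_{oc}(δ)‖²‖P‖²·(4p₂/(δ p₁)), one has V_{k+1} − V_k ≤ −(δ p₁/(4p₂))‖x̂_k‖². -/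
open Matrix
open scoped Matrix.Norms.L2Operator RealInnerProductSpace

lemma aux_quad_lower {n : ℕ} {A : Matrix (Fin n) (Fin n) ℝ} {c : ℝ}
    (h : (A - c • (1 : Matrix (Fin n) (Fin n) ℝ)).PosSemidef) (v : Fin n → ℝ) :
    c * ∑ i, v i ^ 2 ≤ v ⬝ᵥ A.mulVec v := by
  have h2 := h.dotProduct_mulVec_nonneg v
  rw [star_trivial] at h2
  have e : v ⬝ᵥ ((A - c • (1 : Matrix (Fin n) (Fin n) ℝ)).mulVec v)
      = v ⬝ᵥ A.mulVec v - c * ∑ i, v i ^ 2 := by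
    simp [sub_mulVec, smul_mulVec, one_mulVec, dotProduct_sub, dotProduct_smul,
      smul_eq_mul, dotProduct, Finset.mul_sum, sq, mul_sub, Finset.sum_sub_distrib, mul_left_comm]
  rw [e] at h2; linarith

lemma aux_norm_mulVec {n : ℕ} (A : Matrix (Fin n) (Fin n) ℝ) (x : Fin n → ℝ) :
    Real.sqrt (∑ i, (A.mulVec x) i ^ 2) ≤ ‖A‖ * Real.sqrt (∑ i, x i ^ 2) := by
  have h := A.l2_opNorm_mulVec ((EuclideanSpace.equiv (Fin n) ℝ).symm x)
  have hx : A *ᵥ ((EuclideanSpace.equiv (Fin n) ℝ).symm x) = A *ᵥ x := rfl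
  rw [hx] at h
  have e1 : ‖(EuclideanSpace.equiv (Fin n) ℝ).symm (A.mulVec x)‖
      = Real.sqrt (∑ i, (A.mulVec x) i ^ 2) := by
    rw [EuclideanSpace.norm_eq]; simp [Real.norm_eq_abs, sq_abs]
  have e2 : ‖(EuclideanSpace.equiv (Fin n) ℝ).symm x‖ = Real.sqrt (∑ i, x i ^ 2) := by
    rw [EuclideanSpace.norm_eq]; simp [Real.norm_eq_abs, sq_abs]
  rw [e1, e2] at h; exact h

lemma aux_dot_le {n : ℕ} (A : Matrix (Fin n) (Fin n) ℝ) (x y : Fin n → ℝ) :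
    x ⬝ᵥ A.mulVec y ≤ Real.sqrt (∑ i, x i ^ 2) * (‖A‖ * Real.sqrt (∑ i, y i ^ 2)) := by
  have h1 : x ⬝ᵥ A.mulVec y
      = ⟪(WithLp.equiv 2 (Fin n → ℝ)).symm x, (WithLp.equiv 2 (Fin n → ℝ)).symm (A.mulVec y)⟫ := by
    rw [EuclideanSpace.inner_eq_star_dotProduct, star_trivial, dotProduct_comm]; rfl
  have h2 := real_inner_le_norm ((WithLp.equiv 2 (Fin n → ℝ)).symm x)
    ((WithLp.equiv 2 (Fin n → ℝ)).symm (A.mulVec y))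
  have e1 : ‖(WithLp.equiv 2 (Fin n → ℝ)).symm x‖ = Real.sqrt (∑ i, x i ^ 2) := by
    rw [EuclideanSpace.norm_eq]; simp [Real.norm_eq_abs, sq_abs]
  have e2 : ‖(WithLp.equiv 2 (Fin n → ℝ)).symm (A.mulVec y)‖
      = Real.sqrt (∑ i, (A.mulVec y) i ^ 2) := by
    rw [EuclideanSpace.norm_eq]; simp [Real.norm_eq_abs, sq_abs]
  have h3 := aux_norm_mulVec A y
  have hs : (0:ℝ) ≤ Real.sqrt (∑ i, x i ^ 2) := Real.sqrt_nonneg _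
  rw [h1]
  calc _ ≤ ‖(WithLp.equiv 2 (Fin n → ℝ)).symm x‖
        * ‖(WithLp.equiv 2 (Fin n → ℝ)).symm (A.mulVec y)‖ := h2
  _ ≤ _ := by rw [e1, e2]; exact mul_le_mul_of_nonneg_left h3 hs

set_option maxHeartbeats 1000000 in
/-- Lyapunov decrease for the coupled discrete-time dynamics: with
`V(e, x̂) = x̂ᵀ P x̂ + μ eᵀ Q e`, contraction of the observer error and of the controller part,
and `μ ≥ 2 q₂ N(δ)/(δ q₁)`, one gets `V_{k+1} − V_k ≤ −(δ p₁/(4 p₂)) ‖x̂_k‖²`. -/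
theorem stmt_5 (n : ℕ) (P Q : Matrix (Fin n) (Fin n) ℝ)
    (hP : P.PosDef) (hQ : Q.PosDef)
    (p₁ p₂ q₁ q₂ : ℝ) (hp₁ : 0 < p₁) (hp₂ : 0 < p₂) (hq₁ : 0 < q₁) (hq₂ : 0 < q₂)
    (hPlow : (P - p₁ • (1 : Matrix (Fin n) (Fin n) ℝ)).PosSemidef)
    (hPhigh : (p₂ • (1 : Matrix (Fin n) (Fin n) ℝ) - P).PosSemidef)
    (hQlow : (Q - q₁ • (1 : Matrix (Fin n) (Fin n) ℝ)).PosSemidef)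
    (hQhigh : (q₂ • (1 : Matrix (Fin n) (Fin n) ℝ) - Q).PosSemidef)
    (δ : ℝ) (hδ : 0 < δ)
    (Fc Fo Foc : Matrix (Fin n) (Fin n) ℝ)
    (xk ek xk1 ek1 : Fin n → ℝ)
    (hxupd : xk1 = Fc.mulVec xk + Foc.mulVec ek)
    (heupd : ek1 = Fo.mulVec ek)
    (hQcontr : ek1 ⬝ᵥ Q.mulVec ek1 ≤ (1 - δ / (2 * q₂)) * (ek ⬝ᵥ Q.mulVec ek))
    (hPcontr : (Fc.mulVec xk) ⬝ᵥ P.mulVec (Fc.mulVec xk)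
        ≤ (1 - δ / (2 * p₂)) * (xk ⬝ᵥ P.mulVec xk))
    (N μ : ℝ)
    (hN : N = ‖Foc‖ ^ 2 * ‖P‖ + ‖Fc‖ ^ 2 * ‖Foc‖ ^ 2 * ‖P‖ ^ 2 * (4 * p₂ / (δ * p₁)))
    (hμ : μ ≥ 2 * q₂ * N / (δ * q₁)) :
    (xk1 ⬝ᵥ P.mulVec xk1 + μ * (ek1 ⬝ᵥ Q.mulVec ek1))
        - (xk ⬝ᵥ P.mulVec xk + μ * (ek ⬝ᵥ Q.mulVec ek))
      ≤ -(δ * p₁ / (4 * p₂)) * ∑ i, xk i ^ 2 := by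
  set a := Fc.mulVec xk with ha
  set b := Foc.mulVec ek with hb
  set S := ∑ i, xk i ^ 2 with hS
  set T := ∑ i, ek i ^ 2 with hT
  set s := Real.sqrt S with hs
  set t := Real.sqrt T with ht
  have hS0 : (0:ℝ) ≤ S := Finset.sum_nonneg fun _ _ => sq_nonneg _
  have hT0 : (0:ℝ) ≤ T := Finset.sum_nonneg fun _ _ => sq_nonneg _
  have hs0 : (0:ℝ) ≤ s := Real.sqrt_nonneg _
  have ht0 : (0:ℝ) ≤ t := Real.sqrt_nonneg _
  have hs2 : s ^ 2 = S := Real.sq_sqrt hS0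
  have ht2 : t ^ 2 = T := Real.sq_sqrt hT0
  set ε := δ * p₁ / (4 * p₂) with hε
  have hε0 : 0 < ε := by positivity
  set K := ‖P‖ * ‖Fc‖ * ‖Foc‖ with hK
  have hK0 : 0 ≤ K := by positivity
  -- norms of a and b
  have hA : Real.sqrt (∑ i, a i ^ 2) ≤ ‖Fc‖ * s := aux_norm_mulVec Fc xk
  have hB : Real.sqrt (∑ i, b i ^ 2) ≤ ‖Foc‖ * t := aux_norm_mulVec Foc ek
  have hA0 : 0 ≤ Real.sqrt (∑ i, a i ^ 2) := Real.sqrt_nonneg _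
  have hB0 : 0 ≤ Real.sqrt (∑ i, b i ^ 2) := Real.sqrt_nonneg _
  -- cross and quadratic bounds
  have cross1 : a ⬝ᵥ P.mulVec b ≤ K * (s * t) := by
    have h := aux_dot_le P a b
    have h2 : Real.sqrt (∑ i, a i ^ 2) * (‖P‖ * Real.sqrt (∑ i, b i ^ 2))
        ≤ (‖Fc‖ * s) * (‖P‖ * (‖Foc‖ * t)) :=
      mul_le_mul hA (mul_le_mul_of_nonneg_left hB (norm_nonneg P)) (by positivity) (by positivity)
    have h3 : (‖Fc‖ * s) * (‖P‖ * (‖Foc‖ * t)) = K * (s * t) := by rw [hK]; ring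
    linarith
  have cross2 : b ⬝ᵥ P.mulVec a ≤ K * (s * t) := by
    have h := aux_dot_le P b a
    have h2 : Real.sqrt (∑ i, b i ^ 2) * (‖P‖ * Real.sqrt (∑ i, a i ^ 2))
        ≤ (‖Foc‖ * t) * (‖P‖ * (‖Fc‖ * s)) :=
      mul_le_mul hB (mul_le_mul_of_nonneg_left hA (norm_nonneg P)) (by positivity) (by positivity)
    have h3 : (‖Foc‖ * t) * (‖P‖ * (‖Fc‖ * s)) = K * (s * t) := by rw [hK]; ring
    linarith
  have hbb : b ⬝ᵥ P.mulVec b ≤ ‖P‖ * ‖Foc‖ ^ 2 * T := by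
    have h := aux_dot_le P b b
    have h2 : Real.sqrt (∑ i, b i ^ 2) * (‖P‖ * Real.sqrt (∑ i, b i ^ 2))
        ≤ (‖Foc‖ * t) * (‖P‖ * (‖Foc‖ * t)) :=
      mul_le_mul hB (mul_le_mul_of_nonneg_left hB (norm_nonneg P)) (by positivity) (by positivity)
    have h3 : (‖Foc‖ * t) * (‖P‖ * (‖Foc‖ * t)) = ‖P‖ * ‖Foc‖ ^ 2 * t ^ 2 := by ring
    rw [← ht2]
    linarith
  -- Young's inequality
  have young : 2 * (K * (s * t)) ≤ ε * S + K ^ 2 / ε * T := by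
    rw [← hs2, ← ht2]
    have h1 := sq_nonneg (ε * s - K * t)
    have key : ε * (2 * (K * (s * t))) ≤ ε * (ε * s ^ 2) + K ^ 2 * t ^ 2 := by nlinarith [h1]
    have he : ε * (ε * s ^ 2 + K ^ 2 / ε * t ^ 2) = ε * (ε * s ^ 2) + K ^ 2 * t ^ 2 := by
      field_simp
    have key2 : ε * (2 * (K * (s * t))) ≤ ε * (ε * s ^ 2 + K ^ 2 / ε * t ^ 2) := by
      rw [he]; exact key
    exact le_of_mul_le_mul_left key2 hε0
  -- quadratic form bounds
  have hPx : p₁ * S ≤ xk ⬝ᵥ P.mulVec xk := aux_quad_lower hPlow xk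
  have hQe : q₁ * T ≤ ek ⬝ᵥ Q.mulVec ek := aux_quad_lower hQlow ek
  -- expansion
  have expand : xk1 ⬝ᵥ P.mulVec xk1
      = a ⬝ᵥ P.mulVec a + a ⬝ᵥ P.mulVec b + b ⬝ᵥ P.mulVec a + b ⬝ᵥ P.mulVec b := by
    rw [hxupd]
    simp only [mulVec_add, dotProduct_add, add_dotProduct]
    ring
  -- μ nonneg and observer bound
  have hN0 : 0 ≤ N := by rw [hN]; positivity
  have hμ0 : 0 ≤ μ := le_trans (by positivity) hμ
  have hμ' : 2 * q₂ * N ≤ μ * (δ * q₁) := (div_le_iff₀ (by positivity)).mp hμ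
  have hNle : N ≤ μ * (δ * q₁) / (2 * q₂) := (le_div_iff₀ (by positivity)).mpr (by linarith)
  have step1 : μ * (ek1 ⬝ᵥ Q.mulVec ek1) ≤ μ * ((1 - δ / (2 * q₂)) * (ek ⬝ᵥ Q.mulVec ek)) :=
    mul_le_mul_of_nonneg_left hQcontr hμ0
  have step2 : (0:ℝ) ≤ μ * (δ / (2 * q₂)) := by positivity
  have step3 : μ * (δ / (2 * q₂)) * (q₁ * T) ≤ μ * (δ / (2 * q₂)) * (ek ⬝ᵥ Q.mulVec ek) :=
    mul_le_mul_of_nonneg_left hQe step2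
  have step4 : N * T ≤ μ * (δ / (2 * q₂)) * (q₁ * T) := by
    have := mul_le_mul_of_nonneg_right hNle hT0
    calc N * T ≤ μ * (δ * q₁) / (2 * q₂) * T := this
    _ = μ * (δ / (2 * q₂)) * (q₁ * T) := by field_simp
  have hobs : μ * (ek1 ⬝ᵥ Q.mulVec ek1) - μ * (ek ⬝ᵥ Q.mulVec ek) ≤ -(N * T) := by
    have e1 : μ * ((1 - δ / (2 * q₂)) * (ek ⬝ᵥ Q.mulVec ek))
        = μ * (ek ⬝ᵥ Q.mulVec ek) - μ * (δ / (2 * q₂)) * (ek ⬝ᵥ Q.mulVec ek) := by ring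
    linarith [step1, step3, step4]
  -- controller bound
  have hPx2 : δ / (2 * p₂) * (p₁ * S) ≤ δ / (2 * p₂) * (xk ⬝ᵥ P.mulVec xk) :=
    mul_le_mul_of_nonneg_left hPx (by positivity)
  have hcontr : xk1 ⬝ᵥ P.mulVec xk1 - xk ⬝ᵥ P.mulVec xk
      ≤ -(2 * ε) * S + ε * S + K ^ 2 / ε * T + ‖P‖ * ‖Foc‖ ^ 2 * T := by
    have e2 : δ / (2 * p₂) * (p₁ * S) = 2 * ε * S := by rw [hε]; field_simp; ring
    have e3 : (1 - δ / (2 * p₂)) * (xk ⬝ᵥ P.mulVec xk)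
        = xk ⬝ᵥ P.mulVec xk - δ / (2 * p₂) * (xk ⬝ᵥ P.mulVec xk) := by ring
    rw [expand]
    linarith [hPcontr, cross1, cross2, hbb, young, hPx2]
  -- N identity
  have hNid : N = ‖P‖ * ‖Foc‖ ^ 2 + K ^ 2 / ε := by
    rw [hN, hK, hε]
    field_simp
  have hNT : N * T = ‖P‖ * ‖Foc‖ ^ 2 * T + K ^ 2 / ε * T := by rw [hNid]; ring
  linarith [hcontr, hobs, hNT]
end

section
/- Let f : ℝⁿ → ℝⁿ have triangular structure with |f_j(x)| ≤ c·(|x₁| + ... + |x_j|) for all j ∈ {1,...,n} and some c ≥ 0. Let L ≥ 1, 0 < b ≤ 1, and 𝓢 = L^{1−b}·diag(1/L, ..., 1/Lⁿ). Then ‖𝓢 f(x)‖² ≤ n² c² ‖𝓢 x‖² for all x ∈ ℝⁿ. -/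
open Finset

/-- If `f` has the triangular bound `|f_j(x)| ≤ c (|x₁| + … + |x_j|)` then the scaled
vector field satisfies `‖𝓢 f(x)‖² ≤ n² c² ‖𝓢 x‖²` where `𝓢 = L^{1−b} diag(1/L,…,1/Lⁿ)`
and `L ≥ 1`, `0 < b ≤ 1`. -/
theorem stmt_6 (n : ℕ) (f : (Fin n → ℝ) → (Fin n → ℝ)) (c : ℝ) (hc : 0 ≤ c)
    (hf : ∀ (x : Fin n → ℝ) (j : Fin n), |f x j| ≤ c * ∑ i ∈ Finset.Iic j, |x i|)
    (L b : ℝ) (hL : 1 ≤ L) (hb0 : 0 < b) (hb1 : b ≤ 1)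
    (S : (Fin n → ℝ) → (Fin n → ℝ))
    (hS : ∀ (x : Fin n → ℝ) (i : Fin n),
      S x i = L ^ ((1 : ℝ) - b - ((i : ℕ) + 1)) * x i) :
    ∀ x : Fin n → ℝ,
      ∑ i, S (f x) i ^ 2 ≤ (n : ℝ) ^ 2 * c ^ 2 * ∑ i, S x i ^ 2 := by
  intro x
  have hL0 : (0:ℝ) < L := lt_of_lt_of_le one_pos hL
  have hpow : ∀ e : ℝ, (0:ℝ) < L ^ e := fun e => Real.rpow_pos_of_pos hL0 e
  -- key pointwise bound
  have key : ∀ j : Fin n, |S (f x) j| ≤ c * ∑ i, |S x i| := by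
    intro j
    rw [hS, abs_mul, abs_of_pos (hpow _)]
    calc L ^ ((1:ℝ) - b - ((j:ℕ) + 1)) * |f x j|
        ≤ L ^ ((1:ℝ) - b - ((j:ℕ) + 1)) * (c * ∑ i ∈ Finset.Iic j, |x i|) := by
          exact mul_le_mul_of_nonneg_left (hf x j) (le_of_lt (hpow _))
      _ = c * ∑ i ∈ Finset.Iic j, L ^ ((1:ℝ) - b - ((j:ℕ) + 1)) * |x i| := by
          simp only [Finset.mul_sum]
          exact Finset.sum_congr rfl fun i _ => by ring
      _ ≤ c * ∑ i ∈ Finset.Iic j, |S x i| := by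
          refine mul_le_mul_of_nonneg_left (Finset.sum_le_sum fun i hi => ?_) hc
          rw [hS, abs_mul, abs_of_pos (hpow _)]
          refine mul_le_mul_of_nonneg_right ?_ (abs_nonneg _)
          refine Real.rpow_le_rpow_of_exponent_le hL ?_
          have : (i:ℕ) ≤ (j:ℕ) := Fin.le_def.mp (Finset.mem_Iic.mp hi)
          have : ((i:ℕ):ℝ) ≤ ((j:ℕ):ℝ) := by exact_mod_cast this
          linarith
      _ ≤ c * ∑ i, |S x i| := by
          refine mul_le_mul_of_nonneg_left ?_ hc
          exact Finset.sum_le_sum_of_subset_of_nonneg (Finset.subset_univ _)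
            (fun i _ _ => abs_nonneg _)
  have habs : (0:ℝ) ≤ ∑ i, |S x i| := Finset.sum_nonneg fun i _ => abs_nonneg _
  have step : ∀ j : Fin n, S (f x) j ^ 2 ≤ c ^ 2 * (∑ i, |S x i|) ^ 2 := by
    intro j
    have := key j
    calc S (f x) j ^ 2 = |S (f x) j| ^ 2 := (sq_abs _).symm
      _ ≤ (c * ∑ i, |S x i|) ^ 2 := by
          exact pow_le_pow_left₀ (abs_nonneg _) this 2
      _ = c ^ 2 * (∑ i, |S x i|) ^ 2 := by ring
  have cs : (∑ i, |S x i|) ^ 2 ≤ (n:ℝ) * ∑ i, S x i ^ 2 := by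
    have := sq_sum_le_card_mul_sum_sq (s := Finset.univ) (f := fun i : Fin n => |S x i|)
    simpa [sq_abs, Finset.card_univ] using this
  calc ∑ j, S (f x) j ^ 2 ≤ ∑ _j : Fin n, c ^ 2 * (∑ i, |S x i|) ^ 2 :=
        Finset.sum_le_sum fun j _ => step j
    _ = (n:ℝ) * (c ^ 2 * (∑ i, |S x i|) ^ 2) := by
        simp [Finset.sum_const, Finset.card_univ, nsmul_eq_mul]
    _ ≤ (n:ℝ) * (c ^ 2 * ((n:ℝ) * ∑ i, S x i ^ 2)) := by
        refine mul_le_mul_of_nonneg_left (mul_le_mul_of_nonneg_left cs (sq_nonneg c)) (Nat.cast_nonneg n)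
    _ = (n:ℝ) ^ 2 * c ^ 2 * ∑ i, S x i ^ 2 := by ring
end
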